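/- Let 0 < ε ≤ G and let η : ℕ → ℝ^d be a sequence such that for every coordinate j the scalar sequence t ↦ (η_t)_j is nonincreasing and satisfies 1/G ≤ (η_t)_j ≤ 1/ε for all t. Then for every T ≥ 1, Σ_{t=0}^{T−1} ‖η_t − η_{t+1}‖² ≤ d(1/ε² − 1/G²), where ‖·‖ is the Euclidean norm. -/

import Mathlib

/-- Telescoping squared-variation bound for the adaptive learning rates: if every coordinate
of `η_t` is nonincreasing in `t` and lies in `[1/G, 1/ε]` with `0 < ε ≤ G`, then for `T ≥ 1`,
`Σ_{t=0}^{T-1} ‖η_t − η_{t+1}‖² ≤ d(1/ε² − 1/G²)`, where `‖·‖` is the Euclidean norm. -/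
theorem adasam_eta_sq_variation {d : ℕ} (hd : 1 ≤ d) (ε G : ℝ)
    (hε : 0 < ε) (hεG : ε ≤ G)
    (η : ℕ → EuclideanSpace ℝ (Fin d))
    (hmono : ∀ t, ∀ j, η (t + 1) j ≤ η t j)
    (hlb : ∀ t, ∀ j, 1 / G ≤ η t j)
    (hub : ∀ t, ∀ j, η t j ≤ 1 / ε)
    (T : ℕ) (hT : 1 ≤ T) :
    ∑ t ∈ Finset.range T, ‖η t - η (t + 1)‖ ^ 2
      ≤ (d : ℝ) * (1 / ε ^ 2 - 1 / G ^ 2) := by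
  have hG : 0 < G := lt_of_lt_of_le hε hεG
  have hnorm : ∀ t, ‖η t - η (t + 1)‖ ^ 2
      = ∑ j : Fin d, (η t j - η (t + 1) j) ^ 2 := by
    intro t
    rw [EuclideanSpace.norm_eq, Real.sq_sqrt (by positivity)]
    congr 1; ext j
    simp [sq_abs]
  calc ∑ t ∈ Finset.range T, ‖η t - η (t + 1)‖ ^ 2
      = ∑ j : Fin d, ∑ t ∈ Finset.range T, (η t j - η (t + 1) j) ^ 2 := by
        rw [Finset.sum_comm]; exact Finset.sum_congr rfl fun t _ => hnorm t
    _ ≤ ∑ j : Fin d, (1 / ε ^ 2 - 1 / G ^ 2) := by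
        apply Finset.sum_le_sum
        intro j _
        calc ∑ t ∈ Finset.range T, (η t j - η (t + 1) j) ^ 2
            ≤ ∑ t ∈ Finset.range T, ((η t j) ^ 2 - (η (t + 1) j) ^ 2) := by
              apply Finset.sum_le_sum
              intro t _
              have h1 : 0 ≤ η (t + 1) j := le_trans (by positivity) (hlb _ j)
              nlinarith [hmono t j]
          _ = (η 0 j) ^ 2 - (η T j) ^ 2 := by
              rw [Finset.sum_range_sub' (fun t => (η t j) ^ 2)]
          _ ≤ 1 / ε ^ 2 - 1 / G ^ 2 := by
              have h1 : (η 0 j) ^ 2 ≤ 1 / ε ^ 2 := by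
                rw [one_div, ← inv_pow]
                apply pow_le_pow_left₀ (le_trans (by positivity) (hlb 0 j)) (by rw [← one_div]; exact hub 0 j)
              have h2 : 1 / G ^ 2 ≤ (η T j) ^ 2 := by
                rw [one_div, ← inv_pow]
                apply pow_le_pow_left₀ (by positivity) (by rw [← one_div]; exact hlb T j)
              linarith
    _ = (d : ℝ) * (1 / ε ^ 2 - 1 / G ^ 2) := by simp [mul_comm]; ring
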